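/- Let (X_v)_{v∈V} be a family of random variables on a probability space (Ω, 𝓕, P) indexed by a finite set V, each valued in a nonempty finite type, and let C ∈ V. If M ⊆ V \ {C} is a Markov blanket of C, then M carries all the predictive information about C contained in the full feature set: for every function f from the value type of X_C to ℝ, the conditional expectation E[f(X_C) ∣ σ(X_v : v ∈ V \ {C})] equals E[f(X_C) ∣ σ(X_m : m ∈ M)] P-almost surely. -/

import Mathlib

open MeasureTheory ProbabilityTheory Set

namespace CFS

variable {V : Type*}

/-- Parents of `v`: vertices with an edge into `v`. -/
def Pa (E : V → V → Prop) (v : V) : Set V := {u | E u v}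

/-- Children of `v`: vertices with an edge from `v`. -/
def Ch (E : V → V → Prop) (v : V) : Set V := {u | E v u}

/-- Descendants of `v`: vertices reachable from `v` by a nonempty directed path. -/
def Desc (E : V → V → Prop) (v : V) : Set V := {u | Relation.TransGen E v u}

/-- Spouses of `v`: the other parents of the children of `v`. -/
def Sp (E : V → V → Prop) (v : V) : Set V := {u | u ≠ v ∧ ∃ w, E u w ∧ E v w}

/-- The Markov blanket set `mb(v)` in the graph: parents, children and spouses. -/
def mb (E : V → V → Prop) (v : V) : Set V := Pa E v ∪ Ch E v ∪ Sp E v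

/-- The edge relation is acyclic (defines a DAG). -/
def Acyclic (E : V → V → Prop) : Prop := ∀ v, ¬ Relation.TransGen E v v

/-- Adjacency: an edge in either direction. -/
def Adj (E : V → V → Prop) (u v : V) : Prop := E u v ∨ E v u

/-- `f 0, f 1, …, f n` is an undirected path between `i` and `j`:
distinct vertices, consecutive ones adjacent. -/
structure IsUPath (E : V → V → Prop) (i j : V) (n : ℕ) (f : ℕ → V) : Prop where
  pos : 0 < n
  start : f 0 = i
  finish : f n = j
  inj : ∀ s ≤ n, ∀ t ≤ n, f s = f t → s = t
  adj : ∀ t < n, Adj E (f t) (f (t + 1))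

/-- The interior vertex at position `t` of the path `f` is a collider:
both incident edges of the path point into it. -/
def ColliderAt (E : V → V → Prop) (f : ℕ → V) (t : ℕ) : Prop :=
  E (f (t - 1)) (f t) ∧ E (f (t + 1)) (f t)

/-- The path `f 0, …, f n` is blocked by `S`: some interior non-collider lies in `S`,
or some interior collider is such that neither it nor any of its descendants lies in `S`. -/
def Blocked (E : V → V → Prop) (S : Set V) (n : ℕ) (f : ℕ → V) : Prop :=
  ∃ t, 0 < t ∧ t < n ∧
    ((¬ ColliderAt E f t ∧ f t ∈ S) ∨
      (ColliderAt E f t ∧ f t ∉ S ∧ ∀ d ∈ Desc E (f t), d ∉ S))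

/-- `i` and `j` are d-separated by `S`: every undirected path between them is blocked by `S`. -/
def DSep (E : V → V → Prop) (i j : V) (S : Set V) : Prop :=
  ∀ n f, IsUPath E i j n f → Blocked E S n f

/-- The sets `A` and `B` are d-separated by `S`. -/
def DSepSet (E : V → V → Prop) (A B S : Set V) : Prop :=
  ∀ i ∈ A, ∀ j ∈ B, DSep E i j S

variable {Ω Val : Type*} [mΩ : MeasurableSpace Ω] [MeasurableSpace Val]

/-- The σ-algebra generated by the family of random variables `(X v)_{v ∈ A}`. -/
def famSigma (X : V → Ω → Val) (A : Set V) : MeasurableSpace Ω :=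
  ⨆ v ∈ A, MeasurableSpace.comap (X v) inferInstance

theorem famSigma_le {X : V → Ω → Val} (hX : ∀ v, Measurable (X v)) (A : Set V) :
    famSigma X A ≤ mΩ :=
  iSup₂_le fun v _ => (hX v).comap_le

/-- The families `(X a)_{a ∈ A}` and `(X b)_{b ∈ B}` are conditionally independent
given the family `(X s)_{s ∈ S}`. -/
def CondIndepFam [StandardBorelSpace Ω] (X : V → Ω → Val) (hX : ∀ v, Measurable (X v))
    (P : Measure Ω) [IsFiniteMeasure P] (S A B : Set V) : Prop :=
  CondIndep (famSigma X S) (famSigma X A) (famSigma X B) (famSigma_le hX S) P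

/-- The Markov condition: every variable is conditionally independent of its
non-descendants (other than itself and its parents) given its parents. -/
def MarkovCondition [StandardBorelSpace Ω] (E : V → V → Prop) (X : V → Ω → Val)
    (hX : ∀ v, Measurable (X v)) (P : Measure Ω) [IsFiniteMeasure P] : Prop :=
  ∀ v, CondIndepFam X hX P (Pa E v) {v} (univ \ ({v} ∪ Desc E v ∪ Pa E v))

/-- `M ⊆ V \ {C}` is a Markov blanket of `C`: conditioned on `(X m)_{m ∈ M}`,
all other variables are independent of `X C`. -/
def IsMarkovBlanket [StandardBorelSpace Ω] (X : V → Ω → Val) (hX : ∀ v, Measurable (X v))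
    (P : Measure Ω) [IsFiniteMeasure P] (C : V) (M : Set V) : Prop :=
  C ∉ M ∧ CondIndepFam X hX P M {C} (univ \ (M ∪ {C}))

/-- A Markov boundary of `C` is a Markov blanket of `C` no proper subset of which
is a Markov blanket of `C`. -/
def IsMarkovBoundary [StandardBorelSpace Ω] (X : V → Ω → Val) (hX : ∀ v, Measurable (X v))
    (P : Measure Ω) [IsFiniteMeasure P] (C : V) (M : Set V) : Prop :=
  IsMarkovBlanket X hX P C M ∧ ∀ M' ⊂ M, ¬ IsMarkovBlanket X hX P C M'

/-- Faithfulness: conditional independence holds exactly when d-separation holds. -/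
def Faithful [StandardBorelSpace Ω] (E : V → V → Prop) (X : V → Ω → Val)
    (hX : ∀ v, Measurable (X v)) (P : Measure Ω) [IsFiniteMeasure P] : Prop :=
  ∀ A B S : Set V, A.Nonempty → B.Nonempty →
    Disjoint A B → Disjoint A S → Disjoint B S →
    (CondIndepFam X hX P S A B ↔ DSepSet E A B S)

/-- `v` is strongly relevant to `C`: `X C` and `X v` are not conditionally independent
given all the remaining variables. -/
def StronglyRelevant [StandardBorelSpace Ω] (X : V → Ω → Val) (hX : ∀ v, Measurable (X v))
    (P : Measure Ω) [IsFiniteMeasure P] (C v : V) : Prop :=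
  ¬ CondIndepFam X hX P (univ \ {C, v}) {C} {v}

end CFS

section KeyLemma

open MeasureTheory ProbabilityTheory

variable {Ω' : Type*} {m' m₁ m₂ : MeasurableSpace Ω'} {mΩ : MeasurableSpace Ω'}
  [StandardBorelSpace Ω']
  {μ : MeasureTheory.Measure Ω'} [MeasureTheory.IsFiniteMeasure μ]

lemma condexp_sup_of_condIndep (hm' : m' ≤ mΩ) (hm₁ : m₁ ≤ mΩ) (hm₂ : m₂ ≤ mΩ)
    (hCI : CondIndep m' m₁ m₂ hm' μ) {t : Set Ω'} (ht : MeasurableSet[m₁] t) :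
    μ[t.indicator (fun _ => (1:ℝ)) | m' ⊔ m₂]
      =ᵐ[μ] μ[t.indicator (fun _ => (1:ℝ)) | m'] := by
  set g : Ω' → ℝ := t.indicator fun _ => (1:ℝ) with hg
  have hgi : Integrable g μ := (integrable_const (1:ℝ)).indicator (hm₁ _ ht)
  have hsup : m' ⊔ m₂ ≤ mΩ := sup_le hm' hm₂
  have hCI' := (ProbabilityTheory.condIndep_iff m' m₁ m₂ hm' hm₁ hm₂ μ).mp hCI
  have key : ∀ s, MeasurableSet[m' ⊔ m₂] s →
      ∫ x in s, (μ[g|m']) x ∂μ = ∫ x in s, g x ∂μ := by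
    have hgen : (m' ⊔ m₂) = MeasurableSpace.generateFrom
        {s | ∃ s₁ s₂, MeasurableSet[m'] s₁ ∧ MeasurableSet[m₂] s₂ ∧ s = s₁ ∩ s₂} := by
      apply le_antisymm
      · refine sup_le ?_ ?_
        · intro s hs
          exact MeasurableSpace.measurableSet_generateFrom
            ⟨s, Set.univ, hs, MeasurableSet.univ, (Set.inter_univ s).symm⟩
        · intro s hs
          exact MeasurableSpace.measurableSet_generateFrom
            ⟨Set.univ, s, MeasurableSet.univ, hs, (Set.univ_inter s).symm⟩
      · rw [MeasurableSpace.generateFrom_le_iff]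
        rintro s ⟨s₁, s₂, h₁, h₂, rfl⟩
        exact MeasurableSet.inter ((le_sup_left : m' ≤ m' ⊔ m₂) _ h₁)
          ((le_sup_right : m₂ ≤ m' ⊔ m₂) _ h₂)
    have hpi : IsPiSystem
        {s : Set Ω' | ∃ s₁ s₂, MeasurableSet[m'] s₁ ∧ MeasurableSet[m₂] s₂ ∧ s = s₁ ∩ s₂} := by
      rintro u ⟨u₁, u₂, hu₁, hu₂, rfl⟩ v ⟨v₁, v₂, hv₁, hv₂, rfl⟩ -
      refine ⟨u₁ ∩ v₁, u₂ ∩ v₂, hu₁.inter hv₁, hu₂.inter hv₂, ?_⟩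
      ext x; simp only [Set.mem_inter_iff]; tauto
    refine fun s hs => @MeasurableSpace.induction_on_inter Ω' (m' ⊔ m₂)
      (fun s _ => ∫ x in s, (μ[g|m']) x ∂μ = ∫ x in s, g x ∂μ) _ hgen hpi
      (by simp) ?_ ?_ ?_ s hs
    · rintro u ⟨s₁, s₂, h₁, h₂, rfl⟩
      have hs₁ : MeasurableSet s₁ := hm' _ h₁
      have hs₂ : MeasurableSet s₂ := hm₂ _ h₂
      have hind₂ : Integrable (s₂.indicator fun _ => (1:ℝ)) μ :=
        (integrable_const (1:ℝ)).indicator hs₂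
      have hb : ∀ x, ‖(s₂.indicator fun _ => (1:ℝ)) x‖ ≤ 1 := fun x => by
        by_cases hx : x ∈ s₂ <;> simp [Set.indicator_apply, hx]
      have hi2 : Integrable (μ[g|m'] * s₂.indicator fun _ => (1:ℝ)) μ := by
        have h := Integrable.bdd_mul (integrable_condExp (f := g) (m := m') (μ := μ))
          ((measurable_const.indicator hs₂).aestronglyMeasurable) (Filter.Eventually.of_forall hb)
        exact h.congr (Filter.Eventually.of_forall fun x => mul_comm _ _)
      have e2 : s₂.indicator (μ[g|m']) = μ[g|m'] * s₂.indicator fun _ => (1:ℝ) := by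
        ext x; by_cases hx : x ∈ s₂ <;> simp [Set.indicator, hx]
      have e4 : μ[(μ[g|m'] * s₂.indicator fun _ => (1:ℝ))|m']
          =ᵐ[μ] μ[g|m'] * μ[s₂.indicator (fun _ => (1:ℝ))|m'] :=
        condExp_mul_of_stronglyMeasurable_left stronglyMeasurable_condExp hi2 hind₂
      have e5 : μ[g|m'] * μ[s₂.indicator (fun _ => (1:ℝ))|m']
          =ᵐ[μ] μ[(t ∩ s₂).indicator (fun _ => (1:ℝ))|m'] := (hCI' t s₂ ht h₂).symm
      have hi3 : Integrable ((t ∩ s₂).indicator fun _ => (1:ℝ)) μ :=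
        (integrable_const (1:ℝ)).indicator ((hm₁ _ ht).inter hs₂)
      calc ∫ x in s₁ ∩ s₂, (μ[g|m']) x ∂μ
          = ∫ x in s₁, s₂.indicator (μ[g|m']) x ∂μ := (setIntegral_indicator hs₂).symm
        _ = ∫ x in s₁, (μ[g|m'] * s₂.indicator fun _ => (1:ℝ)) x ∂μ := by rw [e2]
        _ = ∫ x in s₁, (μ[(μ[g|m'] * s₂.indicator fun _ => (1:ℝ))|m']) x ∂μ :=
            (setIntegral_condExp hm' hi2 h₁).symm
        _ = ∫ x in s₁, (μ[(t ∩ s₂).indicator (fun _ => (1:ℝ))|m']) x ∂μ := by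
            refine integral_congr_ae (Filter.EventuallyEq.restrict ?_)
            exact e4.trans e5
        _ = ∫ x in s₁, (t ∩ s₂).indicator (fun _ => (1:ℝ)) x ∂μ :=
            setIntegral_condExp hm' hi3 h₁
        _ = ∫ x in s₁ ∩ (t ∩ s₂), (1:ℝ) ∂μ := setIntegral_indicator ((hm₁ _ ht).inter hs₂)
        _ = ∫ x in (s₁ ∩ s₂) ∩ t, (1:ℝ) ∂μ := by
            rw [show s₁ ∩ (t ∩ s₂) = (s₁ ∩ s₂) ∩ t by
              ext x; simp only [Set.mem_inter_iff]; tauto]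
        _ = ∫ x in s₁ ∩ s₂, g x ∂μ := (setIntegral_indicator (hm₁ _ ht)).symm
    · intro u hu ih
      have hu' : MeasurableSet u := hsup _ hu
      have h1 := integral_add_compl hu' (integrable_condExp (f := g) (m := m') (μ := μ))
      have h2 := integral_add_compl hu' hgi
      have h3 : ∫ x, (μ[g|m']) x ∂μ = ∫ x, g x ∂μ := integral_condExp hm'
      linarith
    · intro fs hdisj hmeas ih
      rw [integral_iUnion (fun i => hsup _ (hmeas i)) hdisj
          (integrable_condExp.integrableOn),
        integral_iUnion (fun i => hsup _ (hmeas i)) hdisj hgi.integrableOn]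
      exact tsum_congr ih
  exact (ae_eq_condExp_of_forall_setIntegral_eq hsup hgi
    (fun s _ _ => integrable_condExp.integrableOn) (fun s hs _ => key s hs)
    (StronglyMeasurable.aestronglyMeasurable (μ := μ)
      ((stronglyMeasurable_condExp (m := m') (f := g) (μ := μ)).mono (le_sup_left : m' ≤ m' ⊔ m₂)))).symm

end KeyLemma

open CFS

/-- A Markov blanket `M` of `C` carries all the predictive information about `C`:
conditional expectations of functions of `X C` given all other features and given
only the features in `M` agree almost surely. -/
theorem stmt_11
    {V Ω Val : Type*} [Fintype V] [MeasurableSpace Ω] [StandardBorelSpace Ω]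
    [MeasurableSpace Val] [DiscreteMeasurableSpace Val] [Fintype Val] [Nonempty Val]
    (X : V → Ω → Val) (hX : ∀ v, Measurable (X v))
    (P : MeasureTheory.Measure Ω) [MeasureTheory.IsProbabilityMeasure P]
    (C : V) (M : Set V) (hM : IsMarkovBlanket X hX P C M)
    (f : Val → ℝ) :
    P[fun ω => f (X C ω)|famSigma X (Set.univ \ {C})]
      =ᵐ[P] P[fun ω => f (X C ω)|famSigma X M] := by
  classical
  obtain ⟨hCM, hCI⟩ := hM
  have hm' : famSigma X M ≤ _ := famSigma_le hX M
  have hm₁ : famSigma X ({C} : Set V) ≤ _ := famSigma_le hX {C}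
  have hm₂ : famSigma X (Set.univ \ (M ∪ {C})) ≤ _ :=
    famSigma_le hX (Set.univ \ (M ∪ {C}))
  have hCI' : CondIndep (famSigma X M) (famSigma X ({C} : Set V))
      (famSigma X (Set.univ \ (M ∪ {C}))) hm' P := hCI
  have hunion : (Set.univ \ {C} : Set V) = M ∪ (Set.univ \ (M ∪ {C})) := by
    have hMC : ∀ v, v ∈ M → v ≠ C := fun v hv he => hCM (he ▸ hv)
    ext v
    simp only [Set.mem_diff, Set.mem_univ, true_and, Set.mem_singleton_iff, Set.mem_union]
    by_cases hv : v ∈ M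
    · simp [hv, hMC v hv]
    · simp [hv]
  have hsupeq : famSigma X (Set.univ \ {C})
      = famSigma X M ⊔ famSigma X (Set.univ \ (M ∪ {C})) := by
    rw [hunion]
    simp only [famSigma]
    exact iSup_union
  have hind_meas : ∀ v : Val, MeasurableSet[famSigma X ({C} : Set V)] (X C ⁻¹' {v}) := by
    intro v
    have hle : MeasurableSpace.comap (X C) inferInstance ≤ famSigma X ({C} : Set V) :=
      le_iSup₂ (f := fun (w : V) (_ : w ∈ ({C} : Set V)) =>
        MeasurableSpace.comap (X w) inferInstance) C rfl
    exact hle _ ⟨{v}, measurableSet_singleton v, rfl⟩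
  have key : ∀ v : Val, P[(X C ⁻¹' {v}).indicator (fun _ => (1:ℝ))|
        famSigma X M ⊔ famSigma X (Set.univ \ (M ∪ {C}))]
      =ᵐ[P] P[(X C ⁻¹' {v}).indicator (fun _ => (1:ℝ))|famSigma X M] := fun v =>
    condexp_sup_of_condIndep hm' hm₁ hm₂ hCI' (hind_meas v)
  have hmeasC : ∀ v : Val, MeasurableSet (X C ⁻¹' {v}) :=
    fun v => hX C (measurableSet_singleton v)
  have hInt : ∀ v : Val, Integrable ((X C ⁻¹' {v}).indicator fun _ => f v) P :=
    fun v => (integrable_const (f v)).indicator (hmeasC v)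
  have hdecomp : (fun ω => f (X C ω))
      = ∑ v : Val, ((X C ⁻¹' {v}).indicator fun _ => f v) := by
    funext ω
    rw [Finset.sum_apply]
    simp only [Set.indicator_apply, Set.mem_preimage, Set.mem_singleton_iff]
    rw [Finset.sum_ite_eq]
    simp
  have hscal : ∀ v : Val, ((X C ⁻¹' {v}).indicator fun _ => f v)
      = f v • ((X C ⁻¹' {v}).indicator fun _ => (1:ℝ)) := by
    intro v
    funext x
    by_cases hx : x ∈ X C ⁻¹' {v} <;> simp [Set.indicator_apply, hx]
  have expand : ∀ m : MeasurableSpace Ω, P[(fun ω => f (X C ω))|m]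
      =ᵐ[P] ∑ v : Val, f v • P[(X C ⁻¹' {v}).indicator (fun _ => (1:ℝ))|m] := by
    intro m
    rw [hdecomp]
    refine (condExp_finsetSum (μ := P) (m := m) (fun v _ => hInt v)).trans ?_
    have h1 : ∀ v : Val, P[((X C ⁻¹' {v}).indicator fun _ => f v)|m]
        =ᵐ[P] f v • P[(X C ⁻¹' {v}).indicator (fun _ => (1:ℝ))|m] := by
      intro v
      rw [hscal v]
      exact condExp_smul (f v) _ m
    have H := ae_all_iff.mpr h1
    filter_upwards [H] with ω hω
    rw [Finset.sum_apply, Finset.sum_apply]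
    exact Finset.sum_congr rfl fun v _ => hω v
  rw [hsupeq]
  refine (expand _).trans (.trans ?_ (expand (famSigma X M)).symm)
  have H := ae_all_iff.mpr key
  filter_upwards [H] with ω hω
  rw [Finset.sum_apply, Finset.sum_apply]
  refine Finset.sum_congr rfl fun v _ => ?_
  simp only [Pi.smul_apply, smul_eq_mul]
  rw [hω v]
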